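/- Let φ: ℝⁿ → (-∞,∞] be convex with minimum value m = min φ, and suppose φ(x) < m + 1/2 for all |x| ≤ ε where 0 < ε. Let (x₀,t₀) be a boundary point of the epigraph epi(φ) ⊆ ℝⁿ⁺¹ and let v = (v_x, v_t) ∈ ℝⁿ × ℝ be an outer normal vector to epi(φ) at (x₀,t₀). Then ⟨x₀, v_x⟩ - v_t ≥ min(ε, 1/2)·|v|. -/

import Mathlib

noncomputable section

/-- Convexity for `(-∞,∞]`-valued functions. -/
def ConvexEReal {n : ℕ} (φ : EuclideanSpace ℝ (Fin n) → EReal) : Prop :=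
  ∀ x y : EuclideanSpace ℝ (Fin n), ∀ a b : ℝ, 0 ≤ a → 0 ≤ b → a + b = 1 →
    φ (a • x + b • y) ≤ (a : EReal) * φ x + (b : EReal) * φ y

/-- If `φ` is convex with minimum value `m`, `φ < m + 1/2` on the ball of radius
`ε > 0`, and `v = (v_x, v_t)` is an outer normal to `epi(φ)` at a boundary point `(x₀,t₀)`,
then `⟨x₀, v_x⟩ - v_t ≥ min(ε,1/2)·|v|`. -/
theorem statement7 (n : ℕ) (φ : EuclideanSpace ℝ (Fin n) → EReal)
    (hbot : ∀ x, φ x ≠ ⊥) (hconv : ConvexEReal φ)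
    (m ε : ℝ) (hε : 0 < ε)
    (hmin : ∀ x, (m : EReal) ≤ φ x)
    (hball : ∀ x, ‖x‖ ≤ ε → φ x < (m : EReal) + ((1 / 2 : ℝ) : EReal))
    (x₀ : EuclideanSpace ℝ (Fin n)) (t₀ : ℝ)
    (hbdry : (x₀, t₀) ∈ frontier {p : EuclideanSpace ℝ (Fin n) × ℝ | φ p.1 ≤ (p.2 : EReal)})
    (vx : EuclideanSpace ℝ (Fin n)) (vt : ℝ)
    (hnormal : ∀ (y : EuclideanSpace ℝ (Fin n)) (s : ℝ), φ y ≤ (s : EReal) →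
      (inner ℝ (y - x₀) vx : ℝ) + (s - t₀) * vt ≤ 0) :
    min ε (1 / 2) * Real.sqrt (‖vx‖ ^ 2 + vt ^ 2) ≤ (inner ℝ x₀ vx : ℝ) - vt := by
  -- any point with norm ≤ ε is in the domain with value ≤ any s ≥ m + 1/2
  have hφle : ∀ y : EuclideanSpace ℝ (Fin n), ‖y‖ ≤ ε → ∀ s : ℝ, m + 1/2 ≤ s →
      φ y ≤ (s : EReal) := by
    intro y hy s hs
    refine le_trans (hball y hy).le ?_
    rw [← EReal.coe_add]
    exact EReal.coe_le_coe_iff.mpr hs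
  have h0ε : ‖(0 : EuclideanSpace ℝ (Fin n))‖ ≤ ε := by simp [hε.le]
  -- vt ≤ 0
  have hvt : vt ≤ 0 := by
    by_contra h
    push_neg at h
    set C := (inner ℝ ((0 : EuclideanSpace ℝ (Fin n)) - x₀) vx : ℝ) with hC
    set s := max (m + 1/2) (t₀ + (|C| + 1) / vt) with hsdef
    have h1 := hnormal 0 s (hφle 0 h0ε s (le_max_left _ _))
    have h2 : (|C| + 1) / vt ≤ s - t₀ := by
      have := le_max_right (m + 1/2) (t₀ + (|C| + 1) / vt)
      linarith
    have h3 : |C| + 1 ≤ (s - t₀) * vt := (div_le_iff₀ h).mp h2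
    have := neg_abs_le C
    rw [← hC] at h1
    linarith
  -- t₀ ≥ m
  have ht₀ : m ≤ t₀ := by
    have hcl : (x₀, t₀) ∈ closure {p : EuclideanSpace ℝ (Fin n) × ℝ | φ p.1 ≤ (p.2 : EReal)} :=
      frontier_subset_closure hbdry
    have hsub : {p : EuclideanSpace ℝ (Fin n) × ℝ | φ p.1 ≤ (p.2 : EReal)} ⊆
        {p : EuclideanSpace ℝ (Fin n) × ℝ | m ≤ p.2} := by
      intro p hp
      have := le_trans (hmin p.1) hp
      exact_mod_cast this
    have := closure_minimal hsub (isClosed_le continuous_const continuous_snd) hcl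
    exact this
  -- main estimate : ε‖vx‖ ≤ ⟨x₀,vx⟩ - (m + 1/2 - t₀) vt
  have hkey : ε * ‖vx‖ ≤ (inner ℝ x₀ vx : ℝ) - (m + 1/2 - t₀) * vt := by
    rcases eq_or_ne vx 0 with hvx | hvx
    · have h1 := hnormal 0 (m + 1/2) (hφle 0 h0ε _ le_rfl)
      rw [inner_sub_left] at h1
      simp [hvx] at h1 ⊢
      linarith
    · set y := (ε / ‖vx‖) • vx with hy
      have hnvx : (0:ℝ) < ‖vx‖ := norm_pos_iff.mpr hvx
      have hyn : ‖y‖ ≤ ε := by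
        rw [hy, norm_smul, norm_div, Real.norm_eq_abs, abs_of_pos hε, norm_norm,
          div_mul_cancel₀ _ hnvx.ne']
      have h1 := hnormal y (m + 1/2) (hφle y hyn _ le_rfl)
      rw [inner_sub_left] at h1
      have hiy : (inner ℝ y vx : ℝ) = ε * ‖vx‖ := by
        rw [hy, real_inner_smul_left, real_inner_self_eq_norm_sq]
        field_simp
      rw [hiy] at h1
      linarith
  -- sqrt bound
  have hsq : Real.sqrt (‖vx‖ ^ 2 + vt ^ 2) ≤ ‖vx‖ + (-vt) := by
    have h1 : ‖vx‖ ^ 2 + vt ^ 2 ≤ (‖vx‖ + (-vt)) ^ 2 := by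
      nlinarith [norm_nonneg vx]
    calc Real.sqrt (‖vx‖ ^ 2 + vt ^ 2) ≤ Real.sqrt ((‖vx‖ + (-vt)) ^ 2) :=
          Real.sqrt_le_sqrt h1
      _ = ‖vx‖ + (-vt) := by
          rw [Real.sqrt_sq (by linarith [norm_nonneg vx])]
  have hminε : min ε (1/2) ≤ ε := min_le_left _ _
  have hminh : min ε (1/2) ≤ 1/2 := min_le_right _ _
  have hmin0 : 0 ≤ min ε (1/2) := le_min hε.le (by norm_num)
  have hsqnn : 0 ≤ Real.sqrt (‖vx‖ ^ 2 + vt ^ 2) := Real.sqrt_nonneg _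
  nlinarith [norm_nonneg vx, mul_le_mul_of_nonneg_left hsq hmin0,
    mul_le_mul_of_nonneg_right hminε (norm_nonneg vx),
    mul_le_mul_of_nonneg_right hminh (neg_nonneg.mpr hvt)]

end
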